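/- There is a unique (up to equivalence) effective action of G_a^n on P^n with an open orbit having only finitely many orbits; it corresponds to the truncated polynomial algebra A = K[S]/(S^{n+1}). Equivalently: a local commutative associative unital K-algebra A of dimension n+1 has only finitely many principal ideals if and only if A ≅ K[S]/(S^{n+1}). -/

import Mathlib

open IsLocalRing Polynomial

lemma auxNilpotent (K A : Type*) [Field K] [CommRing A] [Algebra K A]
    [FiniteDimensional K A] [IsLocalRing A] :
    ∃ N, (maximalIdeal A) ^ N = ⊥ := by
  have hart : IsArtinianRing A := isArtinian_of_tower K inferInstance
  have h1 : IsNilpotent ((⊥ : Ideal A).jacobson) := IsArtinianRing.isNilpotent_jacobson_bot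
  rw [IsLocalRing.jacobson_eq_maximalIdeal ⊥ bot_ne_top] at h1
  obtain ⟨N, hN⟩ := h1
  exact ⟨N, by simpa using hN⟩

lemma auxFinite (K A : Type*) [Field K] [CommRing A] [Algebra K A]
    [FiniteDimensional K A] [IsLocalRing A] (s : A)
    (hs : maximalIdeal A = Ideal.span {s}) :
    {I : Ideal A | ∃ a : A, I = Ideal.span {a}}.Finite := by
  classical
  obtain ⟨N, hN⟩ := auxNilpotent K A
  have hsN : s ^ N = 0 := by
    have h1 : s ^ N ∈ (maximalIdeal A) ^ N := by
      rw [hs, Ideal.span_singleton_pow]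
      exact Ideal.mem_span_singleton_self _
    rw [hN] at h1
    simpa using h1
  apply Set.Finite.subset (Set.Finite.image (fun k => Ideal.span {s ^ k}) (Set.finite_Iic N))
  rintro I ⟨a, rfl⟩
  by_cases ha : a = 0
  · exact ⟨N, Set.mem_Iic.mpr le_rfl, by show Ideal.span {s ^ N} = _; rw [ha, hsN]⟩
  · have hexists : ∃ j, a ∉ Ideal.span {s ^ j} := by
      refine ⟨N, ?_⟩
      rw [hsN, Ideal.span_singleton_eq_bot.mpr rfl]
      simpa using ha
    set j0 := Nat.find hexists with hj0def
    have hj0 : a ∉ Ideal.span {s ^ j0} := Nat.find_spec hexists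
    have hj0N : j0 ≤ N := Nat.find_min' hexists (by
      rw [hsN, Ideal.span_singleton_eq_bot.mpr rfl]; simpa using ha)
    have hj0pos : j0 ≠ 0 := by
      intro h
      apply hj0
      rw [h, pow_zero, Ideal.span_singleton_one]
      exact Submodule.mem_top
    obtain ⟨k, hk⟩ := Nat.exists_eq_succ_of_ne_zero hj0pos
    have hak : a ∈ Ideal.span {s ^ k} := by
      by_contra h
      exact Nat.find_min hexists (by omega) h
    obtain ⟨c, hc⟩ := Ideal.mem_span_singleton'.mp hak
    have hcu : IsUnit c := by
      by_contra hcu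
      have hcm : c ∈ maximalIdeal A := (IsLocalRing.mem_maximalIdeal c).mpr hcu
      rw [hs, Ideal.mem_span_singleton'] at hcm
      obtain ⟨d, hd⟩ := hcm
      apply hj0
      rw [hk, Ideal.mem_span_singleton']
      exact ⟨d, by rw [← hc, ← hd, pow_succ]; ring⟩
    refine ⟨k, Set.mem_Iic.mpr (by omega), ?_⟩
    show Ideal.span {s ^ k} = Ideal.span {a}
    apply le_antisymm
    · rw [Ideal.span_le, Set.singleton_subset_iff]
      obtain ⟨u, hu⟩ := hcu
      show s ^ k ∈ Ideal.span {a}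
      rw [Ideal.mem_span_singleton']
      exact ⟨↑u⁻¹, by rw [← hc, ← hu, ← mul_assoc, Units.inv_mul, one_mul]⟩
    · rw [Ideal.span_le, Set.singleton_subset_iff]
      exact hak


lemma auxPrincipal (K A : Type*) [Field K] [CharZero K] [CommRing A] [Algebra K A]
    [IsLocalRing A]
    (hfin : {I : Ideal A | ∃ a : A, I = Ideal.span {a}}.Finite) :
    ∃ s : A, maximalIdeal A = Ideal.span {s} := by
  have hsub : {I : Ideal A | ∃ a ∈ maximalIdeal A, I = Ideal.span {a}}.Finite :=
    hfin.subset (by rintro I ⟨a, _, rfl⟩; exact ⟨a, rfl⟩)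
  obtain ⟨I, hI, hImax'⟩ := Set.Finite.exists_maximalFor id _ hsub
    ⟨Ideal.span {(0 : A)}, 0, (maximalIdeal A).zero_mem, rfl⟩
  have hImax : ∀ J, J ∈ {I : Ideal A | ∃ a ∈ maximalIdeal A, I = Ideal.span {a}} →
      id I ≤ id J → id I = id J := fun J hJ h => le_antisymm h (hImax' hJ h)
  obtain ⟨a₀, ha₀m, rfl⟩ := hI
  refine ⟨a₀, le_antisymm ?_ (Ideal.span_le.mpr (Set.singleton_subset_iff.mpr ha₀m))⟩
  intro b hb
  have hmap : Set.MapsTo (fun t : K => Ideal.span {a₀ + algebraMap K A t * b}) Set.univ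
      {I : Ideal A | ∃ a ∈ maximalIdeal A, I = Ideal.span {a}} := by
    intro t _
    exact ⟨_, add_mem ha₀m (Ideal.mul_mem_left _ _ hb), rfl⟩
  obtain ⟨t, -, t', -, htt', heq⟩ :=
    Set.infinite_univ.exists_ne_map_eq_of_mapsTo hmap hsub
  set J := Ideal.span {a₀ + algebraMap K A t * b} with hJ
  have h1 : a₀ + algebraMap K A t * b ∈ J := Ideal.subset_span rfl
  have h2 : a₀ + algebraMap K A t' * b ∈ J := by
    have : Ideal.span {a₀ + algebraMap K A t' * b} = J := heq.symm
    rw [← this]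
    exact Ideal.subset_span rfl
  have h3 : algebraMap K A (t - t') * b ∈ J := by
    have h4 := J.sub_mem h1 h2
    have h5 : a₀ + algebraMap K A t * b - (a₀ + algebraMap K A t' * b)
        = algebraMap K A (t - t') * b := by
      rw [map_sub]; ring
    rwa [h5] at h4
  have hbJ : b ∈ J := by
    obtain ⟨u, hu⟩ := ((sub_ne_zero.mpr htt').isUnit).map (algebraMap K A)
    have h4 : (↑u⁻¹ : A) * (algebraMap K A (t - t') * b) ∈ J := Ideal.mul_mem_left _ _ h3
    rwa [← hu, ← mul_assoc, Units.inv_mul, one_mul] at h4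
  have ha₀J : a₀ ∈ J := by
    have h4 := J.sub_mem h1 (Ideal.mul_mem_left J (algebraMap K A t) hbJ)
    simpa using h4
  have hle : Ideal.span {a₀} ≤ J := Ideal.span_le.mpr (Set.singleton_subset_iff.mpr ha₀J)
  have := hImax J (hmap (Set.mem_univ t)) hle
  simp only [id_eq] at this
  rw [← this] at hbJ
  exact hbJ

lemma auxEquiv (K A : Type*) [Field K] [IsAlgClosed K] [CommRing A] [Algebra K A]
    [FiniteDimensional K A] [IsLocalRing A] (n : ℕ) (hdim : Module.finrank K A = n + 1)
    (s : A) (hs : maximalIdeal A = Ideal.span {s}) :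
    Nonempty (A ≃ₐ[K] (Polynomial K ⧸ Ideal.span ({X ^ (n + 1)} : Set (Polynomial K)))) := by
  obtain ⟨N, hN⟩ := auxNilpotent K A
  -- residue field is K
  haveI htower : IsScalarTower K A (ResidueField A) :=
    IsScalarTower.of_algebraMap_eq fun r => rfl
  haveI hfinRF : Module.Finite K (ResidueField A) :=
    Module.Finite.of_surjective (IsScalarTower.toAlgHom K A (ResidueField A)).toLinearMap
      (residue_surjective)
  haveI hint : Algebra.IsIntegral K (ResidueField A) := Algebra.IsIntegral.of_finite K _
  have hres : ∀ a : A, ∃ r : K, a - algebraMap K A r ∈ maximalIdeal A := by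
    intro a
    obtain ⟨r, hr⟩ := (IsAlgClosed.algebraMap_bijective_of_isIntegral
      (k := K) (K := ResidueField A)).2 (residue A a)
    refine ⟨r, ?_⟩
    have h1 : residue A (a - algebraMap K A r) = 0 := by
      have h2 : (residue A) ((algebraMap K A) r) = algebraMap K (ResidueField A) r :=
        (IsScalarTower.algebraMap_apply K A (ResidueField A) r).symm
      rw [map_sub, ← hr, h2, sub_self]
    rwa [residue_eq_zero_iff] at h1
  -- A is generated by s
  have key : ∀ d i : ℕ, N ≤ i + d → ∀ x ∈ (maximalIdeal A) ^ i, x ∈ Algebra.adjoin K {s} := by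
    intro d
    induction d with
    | zero =>
      intro i hi x hx
      have h1 : (maximalIdeal A) ^ i ≤ (maximalIdeal A) ^ N :=
        Ideal.pow_le_pow_right (by omega)
      rw [hN] at h1
      have : x = 0 := by simpa using h1 hx
      rw [this]; exact Subalgebra.zero_mem _
    | succ d ih =>
      intro i hi x hx
      rw [hs, Ideal.span_singleton_pow, Ideal.mem_span_singleton'] at hx
      obtain ⟨c, hc⟩ := hx
      obtain ⟨r, hr⟩ := hres c
      have hx2 : (c - algebraMap K A r) * s ^ i ∈ (maximalIdeal A) ^ (i + 1) := by
        rw [pow_succ, mul_comm ((c - algebraMap K A r)) (s ^ i)]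
        exact Ideal.mul_mem_mul
          (by rw [hs, Ideal.span_singleton_pow]; exact Ideal.mem_span_singleton_self _) hr
      have hmem : (c - algebraMap K A r) * s ^ i ∈ Algebra.adjoin K {s} :=
        ih (i + 1) (by omega) _ hx2
      have hx3 : x = algebraMap K A r * s ^ i + (c - algebraMap K A r) * s ^ i := by
        rw [← hc]; ring
      rw [hx3]
      exact add_mem (mul_mem (Subalgebra.algebraMap_mem _ r)
        (pow_mem (Algebra.self_mem_adjoin_singleton K s) i)) hmem
  have htop : Algebra.adjoin K {s} = ⊤ := by
    rw [eq_top_iff]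
    intro x _
    refine key N 0 (by omega) x ?_
    rw [pow_zero, Ideal.one_eq_top]
    exact Submodule.mem_top
  have hsurj : Function.Surjective (aeval s : K[X] →ₐ[K] A) := by
    rw [← AlgHom.range_eq_top, ← Algebra.adjoin_singleton_eq_range_aeval]
    exact htop
  -- kernel is span of X^k
  have hsN : s ^ N = 0 := by
    have h1 : s ^ N ∈ (maximalIdeal A) ^ N := by
      rw [hs, Ideal.span_singleton_pow]
      exact Ideal.mem_span_singleton_self _
    rw [hN] at h1
    simpa using h1
  obtain ⟨g, hg⟩ := (IsPrincipalIdealRing.principal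
    (RingHom.ker (aeval s : K[X] →ₐ[K] A))).principal
  have hXN : (X : K[X]) ^ N ∈ RingHom.ker (aeval s : K[X] →ₐ[K] A) := by
    rw [RingHom.mem_ker, map_pow, aeval_X, hsN]
  have hdvd : g ∣ (X : K[X]) ^ N := by
    rw [hg, Ideal.submodule_span_eq, Ideal.mem_span_singleton] at hXN
    exact hXN
  obtain ⟨k, hkN, hassoc⟩ := (dvd_prime_pow Polynomial.prime_X N).mp hdvd
  have hker : RingHom.ker (aeval s : K[X] →ₐ[K] A) = Ideal.span {(X : K[X]) ^ k} := by
    rw [hg, Ideal.submodule_span_eq]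
    exact Ideal.span_singleton_eq_span_singleton.mpr hassoc
  let e2 : (K[X] ⧸ Ideal.span {(X : K[X]) ^ k}) ≃ₐ[K] A :=
    (Ideal.quotientEquivAlgOfEq K hker).symm.trans
      (Ideal.quotientKerAlgEquivOfSurjective hsurj)
  have hfr : Module.finrank K (K[X] ⧸ Ideal.span ({(X : K[X]) ^ k} : Set K[X])) = k := by
    have hne : ((X : K[X]) ^ k) ≠ 0 := pow_ne_zero _ X_ne_zero
    have h1 := (AdjoinRoot.powerBasis hne).finrank
    rwa [AdjoinRoot.powerBasis_dim, natDegree_X_pow] at h1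
  have hk : k = n + 1 := by
    have h1 := e2.toLinearEquiv.finrank_eq
    rw [hdim, hfr] at h1
    omega
  subst hk
  exact ⟨e2.symm⟩

lemma auxBack (K A : Type*) [Field K] [CommRing A] [Algebra K A] [IsLocalRing A] (n : ℕ)
    (e : A ≃ₐ[K] (Polynomial K ⧸ Ideal.span ({X ^ (n + 1)} : Set (Polynomial K)))) :
    ∃ s : A, maximalIdeal A = Ideal.span {s} := by
  set Iq : Ideal (Polynomial K) := Ideal.span ({X ^ (n + 1)} : Set (Polynomial K)) with hIq
  let π := Ideal.Quotient.mk Iq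
  have hpow : π (X ^ (n + 1)) = 0 :=
    Ideal.Quotient.eq_zero_iff_mem.mpr (Ideal.subset_span rfl)
  have hXnil : (π X) ^ (n + 1) = 0 := by rw [← map_pow]; exact hpow
  haveI hnontriv : Nontrivial (Polynomial K ⧸ Iq) := e.symm.toEquiv.nontrivial
  refine ⟨e.symm (π X), le_antisymm ?_ ?_⟩
  · intro a ha
    obtain ⟨p, hp⟩ := Ideal.Quotient.mk_surjective (e a)
    by_cases h0 : p.coeff 0 = 0
    · obtain ⟨q, hq⟩ := X_dvd_iff.mpr h0
      rw [Ideal.mem_span_singleton']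
      refine ⟨e.symm (π q), ?_⟩
      have h1 : e a = π X * π q := by rw [← map_mul, ← hq, hp]
      calc e.symm (π q) * e.symm (π X) = e.symm (π q * π X) := (map_mul _ _ _).symm
        _ = e.symm (e a) := by rw [mul_comm, ← h1]
        _ = a := e.symm_apply_apply a
    · exfalso
      have hndvd : ¬ ((X : K[X]) ∣ p) := fun hdvd => h0 (X_dvd_iff.mp hdvd)
      have hcop : IsCoprime ((X : K[X]) ^ (n + 1)) p :=
        ((Polynomial.prime_X.coprime_iff_not_dvd).mpr hndvd).pow_left
      obtain ⟨u, v, huv⟩ := hcop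
      have hunit : IsUnit (π p) := by
        refine IsUnit.of_mul_eq_one (π v) ?_
        have h2 := congrArg π huv
        rw [map_add, map_mul, map_mul, map_one, hpow, mul_zero, zero_add] at h2
        rw [mul_comm]; exact h2
      rw [hp] at hunit
      have h3 := hunit.map e.symm
      rw [e.symm_apply_apply] at h3
      exact (mem_nonunits_iff.mp ((IsLocalRing.mem_maximalIdeal a).mp ha)) h3
  · rw [Ideal.span_le, Set.singleton_subset_iff]
    show e.symm (π X) ∈ maximalIdeal A
    rw [IsLocalRing.mem_maximalIdeal, mem_nonunits_iff]
    intro hu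
    have h4 := hu.map e
    rw [e.apply_symm_apply] at h4
    have h5 := h4.pow (n + 1)
    rw [hXnil] at h5
    exact zero_ne_one (isUnit_zero_iff.mp h5)

/-- A local commutative associative unital `K`-algebra of dimension `n+1` has
only finitely many principal ideals if and only if it is isomorphic to the
truncated polynomial algebra `K[S]/(S^{n+1})`.  (Equivalently: there is a
unique additive action on `P^n` with finitely many orbits, corresponding to
this algebra.) -/
theorem finitely_many_principal_ideals_iff_truncated_polynomials
    {K A : Type*} [Field K] [IsAlgClosed K] [CharZero K]
    [CommRing A] [Algebra K A] [FiniteDimensional K A] [IsLocalRing A]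
    (n : ℕ) (hdim : Module.finrank K A = n + 1) :
    {I : Ideal A | ∃ a : A, I = Ideal.span {a}}.Finite ↔
      Nonempty (A ≃ₐ[K]
        (Polynomial K ⧸ Ideal.span ({Polynomial.X ^ (n + 1)} : Set (Polynomial K)))) := by
  constructor
  · intro hfin
    obtain ⟨s, hs⟩ := auxPrincipal K A hfin
    exact auxEquiv K A n hdim s hs
  · rintro ⟨e⟩
    obtain ⟨s, hs⟩ := auxBack K A n e
    exact auxFinite K A s hs
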